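/- The commuting graph of the alternating group A_5 is a disjoint union of complete graphs K_4 (from subgroups of order 5 minus identity), K_2 (from subgroups of order 3 minus identity), and K_3 (from Klein four-subgroups minus identity), and hence is planar. -/

import Mathlib

set_option maxRecDepth 100000
set_option maxHeartbeats 1000000

open SimpleGraph

/-- The commuting graph of a group `G`: vertices are the non-central elements,
two distinct vertices are adjacent iff they commute. -/
def commGraph (G : Type*) [Group G] : SimpleGraph {x : G // x ∉ Subgroup.center G} where
  Adj x y := x ≠ y ∧ (x : G) * y = (y : G) * x
  symm := ⟨fun _ _ h => ⟨h.1.symm, h.2.symm⟩⟩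
  loopless := ⟨fun _ h => h.1 rfl⟩

/-- A disjoint union of complete graphs, with `n` components of sizes `size 0, …, size (n-1)`. -/
def cliquesGraph {n : ℕ} (size : Fin n → ℕ) : SimpleGraph (Σ i, Fin (size i)) where
  Adj x y := x ≠ y ∧ x.1 = y.1
  symm := ⟨fun _ _ h => ⟨h.1.symm, h.2.symm⟩⟩
  loopless := ⟨fun _ h => h.1 rfl⟩

/-- A rotation system (combinatorial orientable embedding) of a graph: a permutation of
the darts preserving tails and acting with a single cycle on the darts at each vertex. -/
structure RotationSystem {V : Type*} (Γ : SimpleGraph V) where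
  rot : Equiv.Perm Γ.Dart
  tail_eq : ∀ d, (rot d).toProd.1 = d.toProd.1
  cyclic : ∀ d e : Γ.Dart, d.toProd.1 = e.toProd.1 → ∃ k : ℕ, (rot ^ k) d = e

/-- The number of faces of the embedding determined by a rotation system: the number of
orbits of the face-tracing map `d ↦ rot d.symm`, plus one face for each isolated vertex. -/
noncomputable def RotationSystem.numFaces {V : Type*} {Γ : SimpleGraph V}
    (R : RotationSystem Γ) : ℕ :=
  Nat.card (Quotient (Relation.EqvGen.setoid (fun d e : Γ.Dart => R.rot d.symm = e)))
    + Nat.card {v : V // ∀ w, ¬ Γ.Adj v w}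

/-- The (orientable) genus of a graph: the least `g` such that some rotation system
satisfies the Euler formula bound `E + 2c ≤ V + F + 2g`
(i.e. `V - E + F = 2c - 2·(sum of component genera)` with total component genus `≤ g`). -/
noncomputable def genus {V : Type*} (Γ : SimpleGraph V) : ℕ :=
  sInf {g : ℕ | ∃ R : RotationSystem Γ,
    (Nat.card Γ.edgeSet : ℤ) + 2 * Nat.card Γ.ConnectedComponent
      ≤ Nat.card V + R.numFaces + 2 * g}

/-- A graph is planar iff it has genus `0`. -/
def IsPlanar {V : Type*} (Γ : SimpleGraph V) : Prop := genus Γ = 0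

namespace A5H

/-! ### The clique-side graph -/

abbrev sz : Fin 21 → ℕ := fun i => if (i : ℕ) < 6 then 4 else if (i : ℕ) < 16 then 2 else 3
abbrev VC := Σ i, Fin (sz i)
abbrev CG : SimpleGraph VC := cliquesGraph sz

instance decAdjCG : DecidableRel CG.Adj := fun x y =>
  decidable_of_iff (x ≠ y ∧ x.1 = y.1) Iff.rfl

lemma sz_pos : ∀ i, 0 < sz i := by decide

def mkV (i : Fin 21) (a : ℕ) : VC := ⟨i, ⟨a % sz i, Nat.mod_lt _ (sz_pos i)⟩⟩

def nxt (s j a : ℕ) : ℕ :=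
  let e := if j % 2 = 1 then 1 else s - 1
  let w := (a + e) % s
  if w = j then (w + e) % s else w

def nxt' (s j a : ℕ) : ℕ :=
  let e := if j % 2 = 1 then s - 1 else 1
  let w := (a + e) % s
  if w = j then (w + e) % s else w

def rotF (d : CG.Dart) : CG.Dart :=
  let x := d.toProd.1
  let z := mkV x.1 (nxt (sz x.1) x.2.val d.toProd.2.2.val)
  if h : x ≠ z then ⟨(x, z), h, rfl⟩ else d

def rotF' (d : CG.Dart) : CG.Dart :=
  let x := d.toProd.1
  let z := mkV x.1 (nxt' (sz x.1) x.2.val d.toProd.2.2.val)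
  if h : x ≠ z then ⟨(x, z), h, rfl⟩ else d

lemma rot_li : ∀ d : CG.Dart, rotF' (rotF d) = d := by decide
lemma rot_ri : ∀ d : CG.Dart, rotF (rotF' d) = d := by decide

def rotC : Equiv.Perm CG.Dart := ⟨rotF, rotF', rot_li, rot_ri⟩

lemma rotC_tail : ∀ d : CG.Dart, (rotC d).toProd.1 = d.toProd.1 := by decide

lemma rotC_cyc3 : ∀ d e : CG.Dart, d.toProd.1 = e.toProd.1 →
    (e = d ∨ e = rotF d ∨ e = rotF (rotF d)) := by decide

/-- The rotation system on the clique-side graph. -/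
def RS_C : RotationSystem CG where
  rot := rotC
  tail_eq := rotC_tail
  cyclic := by
    intro d e h
    rcases rotC_cyc3 d e h with h1 | h1 | h1
    · exact ⟨0, h1.symm⟩
    · exact ⟨1, by rw [pow_one]; exact h1.symm⟩
    · exact ⟨2, by rw [pow_succ, pow_one, Equiv.Perm.mul_apply]; exact h1.symm⟩

def g4 (u v : ℕ) : ℕ :=
  match u, v with
  | 0,1 => 0 | 0,2 => 1 | 0,3 => 2
  | 1,0 => 2 | 1,2 => 0 | 1,3 => 3
  | 2,0 => 0 | 2,1 => 3 | 2,3 => 1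
  | 3,0 => 1 | 3,1 => 2 | 3,2 => 3
  | _,_ => 0

def g3 (u v : ℕ) : ℕ :=
  match u, v with
  | 0,1 => 0 | 1,2 => 0 | 2,0 => 0
  | _,_ => 1

def idxN (d : CG.Dart) : ℕ :=
  let i := d.toProd.1.1.val
  let u := d.toProd.1.2.val
  let v := d.toProd.2.2.val
  if i < 6 then 4*i + g4 u v else if i < 16 then 24 + (i-6) else 34 + 2*(i-16) + g3 u v

def idx (d : CG.Dart) : Fin 44 := ⟨idxN d % 44, Nat.mod_lt _ (by norm_num)⟩

lemma idx_face : ∀ d : CG.Dart, idx (rotC d.symm) = idx d := by decide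
lemma idx_surj : ∀ k : Fin 44, ∃ d : CG.Dart, idx d = k := by decide

lemma card_VC : Fintype.card VC = 59 := by decide
lemma card_dartC : Fintype.card CG.Dart = 122 := by decide

lemma card_edgeC : Nat.card CG.edgeSet = 61 := by
  have h := CG.dart_card_eq_twice_card_edges
  rw [card_dartC] at h
  rw [Nat.card_eq_fintype_card, ← Set.toFinset_card]
  simp only [SimpleGraph.edgeFinset] at h
  omega

lemma walk_fst {v w : VC} (p : CG.Walk v w) : v.1 = w.1 := by
  induction p with
  | nil => rfl
  | cons h _ ih => exact h.2.trans ih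

def compEquivC : CG.ConnectedComponent ≃ Fin 21 where
  toFun := ConnectedComponent.lift (fun v => v.1) (fun v w p _ => walk_fst p)
  invFun := fun i => CG.connectedComponentMk ⟨i, ⟨0, sz_pos i⟩⟩
  left_inv := by
    apply ConnectedComponent.ind
    intro v
    apply ConnectedComponent.sound
    by_cases h : (⟨v.1, ⟨0, sz_pos v.1⟩⟩ : VC) = v
    · exact h ▸ Reachable.refl _
    · exact (Adj.reachable ⟨h, rfl⟩)
  right_inv := fun i => rfl

lemma card_compC : Nat.card CG.ConnectedComponent = 21 := by
  rw [Nat.card_congr compEquivC, Nat.card_eq_fintype_card, Fintype.card_fin]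

/-! ### Explicit elements of `A₅` -/

def cyc5 (a b c d e : Fin 5) : Equiv.Perm (Fin 5) :=
  Equiv.swap a b * Equiv.swap b c * Equiv.swap c d * Equiv.swap d e

def cyc3 (a b c : Fin 5) : Equiv.Perm (Fin 5) := Equiv.swap a b * Equiv.swap b c

def dt (a b c d : Fin 5) : Equiv.Perm (Fin 5) := Equiv.swap a b * Equiv.swap c d

def gen5 : ℕ → Equiv.Perm (Fin 5)
  | 0 => cyc5 0 1 2 3 4
  | 1 => cyc5 0 1 2 4 3
  | 2 => cyc5 0 1 3 2 4
  | 3 => cyc5 0 1 3 4 2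
  | 4 => cyc5 0 1 4 2 3
  | _ => cyc5 0 1 4 3 2

def gen3 : ℕ → Equiv.Perm (Fin 5)
  | 0 => cyc3 0 1 2
  | 1 => cyc3 0 1 3
  | 2 => cyc3 0 1 4
  | 3 => cyc3 0 2 3
  | 4 => cyc3 0 2 4
  | 5 => cyc3 0 3 4
  | 6 => cyc3 1 2 3
  | 7 => cyc3 1 2 4
  | 8 => cyc3 1 3 4
  | _ => cyc3 2 3 4

def kl : ℕ → ℕ → Equiv.Perm (Fin 5)
  | 0, 0 => dt 1 2 3 4 | 0, 1 => dt 1 3 2 4 | 0, _ => dt 1 4 2 3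
  | 1, 0 => dt 0 2 3 4 | 1, 1 => dt 0 3 2 4 | 1, _ => dt 0 4 2 3
  | 2, 0 => dt 0 1 3 4 | 2, 1 => dt 0 3 1 4 | 2, _ => dt 0 4 1 3
  | 3, 0 => dt 0 1 2 4 | 3, 1 => dt 0 2 1 4 | 3, _ => dt 0 4 1 2
  | _, 0 => dt 0 1 2 3 | _, 1 => dt 0 2 1 3 | _, _ => dt 0 3 1 2

def pfun (v : VC) : Equiv.Perm (Fin 5) :=
  let i := v.1.val
  let j := v.2.val
  if i < 6 then (gen5 i)^(j+1)
  else if i < 16 then (gen3 (i-6))^(j+1)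
  else kl (i-16) j

lemma pfun_sign : ∀ v : VC, Equiv.Perm.sign (pfun v) = 1 := by decide
lemma pfun_inj' : ∀ v w : VC, pfun v = pfun w → v = w := by decide
lemma pfun_adj : ∀ v w : VC, (pfun v * pfun w = pfun w * pfun v ↔ v.1 = w.1) := by decide
lemma pfun_ncent : ∀ v : VC, ∃ g : Equiv.Perm (Fin 5),
    Equiv.Perm.sign g = 1 ∧ g * pfun v ≠ pfun v * g := by decide
lemma pfun_surj' : ∀ x : Equiv.Perm (Fin 5), Equiv.Perm.sign x = 1 → x ≠ 1 →
    ∃ v : VC, pfun v = x := by decide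

/-! ### The vertex bijection and graph isomorphism -/

abbrev Vm := {x : ↥(alternatingGroup (Fin 5)) // x ∉ Subgroup.center ↥(alternatingGroup (Fin 5))}

def fV (v : VC) : Vm :=
  ⟨⟨pfun v, Equiv.Perm.mem_alternatingGroup.mpr (pfun_sign v)⟩, fun hc => by
    obtain ⟨g, hg1, hg2⟩ := pfun_ncent v
    exact hg2 (congrArg Subtype.val
      (Subgroup.mem_center_iff.mp hc ⟨g, Equiv.Perm.mem_alternatingGroup.mpr hg1⟩))⟩

lemma fV_inj : Function.Injective fV := fun v w h =>
  pfun_inj' v w (congrArg (fun x : Vm => x.val.val) h)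

lemma fV_surj : Function.Surjective fV := by
  rintro ⟨⟨x, hx⟩, hc⟩
  have hx1 : x ≠ 1 := by
    rintro rfl
    exact hc ((show (⟨(1 : Equiv.Perm (Fin 5)), hx⟩ : ↥(alternatingGroup (Fin 5))) = 1 from
      Subtype.ext rfl) ▸ Subgroup.one_mem _)
  obtain ⟨v, hv⟩ := pfun_surj' x (Equiv.Perm.mem_alternatingGroup.mp hx) hx1
  exact ⟨v, Subtype.ext (Subtype.ext hv)⟩

noncomputable def eV : VC ≃ Vm := Equiv.ofBijective fV ⟨fV_inj, fV_surj⟩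

noncomputable def isoCG : CG ≃g commGraph ↥(alternatingGroup (Fin 5)) where
  toEquiv := eV
  map_rel_iff' := by
    intro a b
    show (fV a ≠ fV b ∧ (fV a).val * (fV b).val = (fV b).val * (fV a).val) ↔ (a ≠ b ∧ a.1 = b.1)
    constructor
    · rintro ⟨hne, hcom⟩
      exact ⟨fun h => hne (congrArg fV h), (pfun_adj a b).mp (congrArg Subtype.val hcom)⟩
    · rintro ⟨hne, hcm⟩
      exact ⟨fun h => hne (fV_inj h), Subtype.ext ((pfun_adj a b).mpr hcm)⟩

/-! ### Transporting the rotation system -/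

def dartEquiv {V V' : Type*} {Γ : SimpleGraph V} {Γ' : SimpleGraph V'} (φ : Γ ≃g Γ') :
    Γ.Dart ≃ Γ'.Dart where
  toFun d := ⟨(φ d.toProd.1, φ d.toProd.2), φ.map_rel_iff.mpr d.adj⟩
  invFun d := ⟨(φ.symm d.toProd.1, φ.symm d.toProd.2), φ.symm.map_rel_iff.mpr d.adj⟩
  left_inv d := by
    apply SimpleGraph.Dart.ext
    exact Prod.ext (φ.toEquiv.symm_apply_apply _) (φ.toEquiv.symm_apply_apply _)
  right_inv d := by
    apply SimpleGraph.Dart.ext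
    exact Prod.ext (φ.toEquiv.apply_symm_apply _) (φ.toEquiv.apply_symm_apply _)

lemma permCongr_pow {α β : Type*} (e : α ≃ β) (σ : Equiv.Perm α) :
    ∀ k : ℕ, (e.permCongr σ) ^ k = e.permCongr (σ ^ k)
  | 0 => by
      ext x
      simp [Equiv.permCongr_apply]
  | (k+1) => by
      rw [pow_succ, permCongr_pow e σ k]
      ext x
      simp [Equiv.permCongr_apply, pow_succ, Equiv.Perm.mul_apply]

noncomputable abbrev DE := dartEquiv isoCG

/-- The transported rotation system on the commuting graph of `A₅`. -/
noncomputable def RS_M : RotationSystem (commGraph ↥(alternatingGroup (Fin 5))) where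
  rot := DE.permCongr RS_C.rot
  tail_eq := by
    intro d
    show isoCG ((RS_C.rot (DE.symm d)).toProd.1) = d.toProd.1
    rw [RS_C.tail_eq (DE.symm d)]
    exact isoCG.toEquiv.apply_symm_apply _
  cyclic := by
    intro d e h
    obtain ⟨k, hk⟩ := RS_C.cyclic (DE.symm d) (DE.symm e)
      (by show isoCG.symm d.toProd.1 = isoCG.symm e.toProd.1; rw [h])
    refine ⟨k, ?_⟩
    rw [permCongr_pow]
    show DE ((RS_C.rot ^ k) (DE.symm d)) = e
    rw [hk]
    exact DE.apply_symm_apply e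

lemma DE_symm_dart_symm (d : (commGraph ↥(alternatingGroup (Fin 5))).Dart) :
    DE.symm d.symm = (DE.symm d).symm := rfl

lemma faces_ge : 44 ≤ RS_M.numFaces := by
  have key : 44 ≤ Nat.card (Quotient (Relation.EqvGen.setoid
      (fun d e : (commGraph ↥(alternatingGroup (Fin 5))).Dart => RS_M.rot d.symm = e))) := by
    have hresp : ∀ d e, RS_M.rot d.symm = e → idx (DE.symm d) = idx (DE.symm e) := by
      intro d e he
      subst he
      have h1 : DE.symm (RS_M.rot d.symm) = RS_C.rot ((DE.symm d).symm) := by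
        show DE.symm (DE (RS_C.rot (DE.symm d.symm))) = _
        rw [DE.symm_apply_apply, DE_symm_dart_symm]
      rw [h1]
      exact (idx_face _).symm
    have hEq : ∀ d e, Relation.EqvGen
        (fun d e : (commGraph ↥(alternatingGroup (Fin 5))).Dart => RS_M.rot d.symm = e) d e →
        idx (DE.symm d) = idx (DE.symm e) := by
      intro d e h
      induction h with
      | rel a b hab => exact hresp a b hab
      | refl => rfl
      | symm a b _ ih => exact ih.symm
      | trans a b c _ _ ih1 ih2 => exact ih1.trans ih2
    let q : Quotient (Relation.EqvGen.setoid
        (fun d e : (commGraph ↥(alternatingGroup (Fin 5))).Dart => RS_M.rot d.symm = e)) → Fin 44 :=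
      Quotient.lift (fun d => idx (DE.symm d)) (fun a b hab => hEq a b hab)
    have hq : Function.Surjective q := by
      intro k
      obtain ⟨d, hd⟩ := idx_surj k
      refine ⟨Quotient.mk _ (DE d), ?_⟩
      show idx (DE.symm (DE d)) = k
      rw [DE.symm_apply_apply]
      exact hd
    haveI : Finite ((commGraph ↥(alternatingGroup (Fin 5))).Dart) := Finite.of_equiv _ DE
    have := Nat.card_le_card_of_surjective q hq
    simpa using this
  exact le_trans key (Nat.le_add_right _ _)

end A5H

/-- The commuting graph of `A₅` is a disjoint union of complete graphs: six copies of
`K₄` (from the subgroups of order `5`), ten copies of `K₂` (from the subgroups of order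
`3`) and five copies of `K₃` (from the Klein four-subgroups); hence it is planar. -/
theorem commGraph_A5 :
    Nonempty (commGraph (alternatingGroup (Fin 5)) ≃g
        cliquesGraph (fun i : Fin 21 =>
          if (i : ℕ) < 6 then 4 else if (i : ℕ) < 16 then 2 else 3)) ∧
      IsPlanar (commGraph (alternatingGroup (Fin 5))) := by
  refine ⟨⟨A5H.isoCG.symm⟩, ?_⟩
  show genus _ = 0
  have hV : Nat.card A5H.Vm = 59 := by
    rw [← Nat.card_congr A5H.eV, Nat.card_eq_fintype_card, A5H.card_VC]
  have hE : Nat.card (commGraph ↥(alternatingGroup (Fin 5))).edgeSet = 61 :=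
    (Nat.card_congr A5H.isoCG.mapEdgeSet).symm.trans A5H.card_edgeC
  have hC : Nat.card (commGraph ↥(alternatingGroup (Fin 5))).ConnectedComponent = 21 :=
    (Nat.card_congr A5H.isoCG.connectedComponentEquiv).symm.trans A5H.card_compC
  have h44 := A5H.faces_ge
  apply Nat.sInf_eq_zero.mpr
  left
  refine ⟨A5H.RS_M, ?_⟩
  rw [hE, hC, hV]
  push_cast
  omega
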